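/- For a finite group G acting on a compact Riemann surface Y with branch data (g(Y); n(1),...,n(k)) where all n(b) ≥ 2, if (2 − 2g(Y)) − Σ_b (1 − 1/n(b)) < 0, then (2g(Y) − 2) + Σ_b (1 − 1/n(b)) ≥ 1/42, with equality exactly for g(Y) = 0 and branch data (2,3,7). -/

import Mathlib

lemma odl {m n : ℕ} (hm : 0 < m) (h : m ≤ n) : (1 / n : ℚ) ≤ 1 / m :=
  one_div_le_one_div_of_le (by exact_mod_cast hm) (by exact_mod_cast h)

lemma nlt {m c : ℕ} (hc : 0 < c) (h : (1 / c : ℚ) < 1 / m) : m < c := by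
  have hc' : (0:ℚ) < c := by exact_mod_cast hc
  have := lt_of_one_div_lt_one_div hc' h
  exact_mod_cast this

lemma opos {c : ℕ} (hc : 0 < c) : (0:ℚ) < 1 / c := by positivity

lemma triple (a b c : ℕ) (ha : 2 ≤ a) (hab : a ≤ b) (hbc : b ≤ c)
    (h : (1/a + 1/b + 1/c : ℚ) < 1) :
    (1/a + 1/b + 1/c : ℚ) ≤ 41/42 ∧
      ((1/a + 1/b + 1/c : ℚ) = 41/42 ↔ (a = 2 ∧ b = 3 ∧ c = 7)) := by
  have hb2 : 2 ≤ b := le_trans ha hab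
  have hc2 : 2 ≤ c := le_trans hb2 hbc
  have hcpos : 0 < c := by omega
  rcases Nat.lt_or_ge a 4 with ha4 | ha4
  · interval_cases a
    · -- a = 2
      push_cast at h
      have hb3 : 3 ≤ b := by
        by_contra hb
        have hb2' : b = 2 := by omega
        subst hb2'
        have := opos hcpos
        push_cast at h
        linarith
      rcases Nat.lt_or_ge b 5 with hb5 | hb5
      · interval_cases b
        · -- b = 3 : 1/c < 1/6, c ≥ 7
          push_cast at h
          have hc' : (1/c : ℚ) < 1/6 := by linarith
          have hc7 : 7 ≤ c := by
            have := nlt (m := 6) hcpos (by push_cast; linarith)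
            omega
          have h7 : (1/c : ℚ) ≤ 1/7 := by
            have := odl (m := 7) (by norm_num) hc7; push_cast at this; linarith
          refine ⟨by push_cast; linarith, ?_, ?_⟩
          · intro he
            push_cast at he
            have hcc : (1/c : ℚ) = 1/7 := by linarith
            have : c ≤ 7 := by
              by_contra hgt
              have h8 : 8 ≤ c := by omega
              have := odl (m := 8) (by norm_num) h8
              push_cast at this
              linarith
            exact ⟨rfl, rfl, by omega⟩
          · rintro ⟨-, -, rfl⟩; norm_num
        · -- b = 4
          push_cast at h
          have hc5 : 5 ≤ c := by
            have := nlt (m := 4) hcpos (by push_cast; linarith)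
            omega
          have h5 : (1/c : ℚ) ≤ 1/5 := by
            have := odl (m := 5) (by norm_num) hc5; push_cast at this; linarith
          refine ⟨by push_cast; linarith, ?_, ?_⟩
          · intro he; exfalso; push_cast at he; linarith
          · rintro ⟨-, hb, -⟩; omega
      · -- b ≥ 5
        have h1 : (1/b : ℚ) ≤ 1/5 := by
          have := odl (m := 5) (by norm_num) hb5; push_cast at this; linarith
        have h2 : (1/c : ℚ) ≤ 1/5 := by
          have := odl (m := 5) (by norm_num) (le_trans hb5 hbc); push_cast at this; linarith
        refine ⟨by push_cast; linarith, ?_, ?_⟩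
        · intro he; exfalso; push_cast at he; linarith
        · rintro ⟨-, hb, -⟩; omega
    · -- a = 3
      push_cast at h
      rcases Nat.lt_or_ge b 4 with hb4 | hb4
      · have hb3 : b = 3 := by omega
        subst hb3
        push_cast at h
        have hc4 : 4 ≤ c := by
          have := nlt (m := 3) hcpos (by push_cast; linarith)
          omega
        have h4 : (1/c : ℚ) ≤ 1/4 := by
          have := odl (m := 4) (by norm_num) hc4; push_cast at this; linarith
        refine ⟨by push_cast; linarith, ?_, ?_⟩
        · intro he; exfalso; push_cast at he; linarith
        · rintro ⟨hb, -, -⟩; omega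
      · have h1 : (1/b : ℚ) ≤ 1/4 := by
          have := odl (m := 4) (by norm_num) hb4; push_cast at this; linarith
        have h2 : (1/c : ℚ) ≤ 1/4 := by
          have := odl (m := 4) (by norm_num) (le_trans hb4 hbc); push_cast at this; linarith
        refine ⟨by push_cast; linarith, ?_, ?_⟩
        · intro he; exfalso; push_cast at he; linarith
        · rintro ⟨hb, -, -⟩; omega
  · -- a ≥ 4
    have h1 : (1/a : ℚ) ≤ 1/4 := by
      have := odl (m := 4) (by norm_num) ha4; push_cast at this; linarith
    have h2 : (1/b : ℚ) ≤ 1/4 := by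
      have := odl (m := 4) (by norm_num) (le_trans ha4 hab); push_cast at this; linarith
    have h3 : (1/c : ℚ) ≤ 1/4 := by
      have := odl (m := 4) (by norm_num) (le_trans (le_trans ha4 hab) hbc); push_cast at this; linarith
    refine ⟨by linarith, ?_, ?_⟩
    · intro he; exfalso; linarith
    · rintro ⟨hb, -, -⟩; omega

lemma hcard {k : ℕ} (n : Fin k → ℕ) : Multiset.card (↑(List.ofFn n) : Multiset ℕ) = k := by
  simp

lemma hcard237 : Multiset.card ({2,3,7} : Multiset ℕ) = 3 := rfl

theorem stmt_7 (g k : ℕ) (n : Fin k → ℕ) (hn : ∀ i, 2 ≤ n i)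
    (hneg : ((2 : ℚ) - 2 * g) - ∑ i, (1 - 1 / (n i : ℚ)) < 0) :
    (1 / 42 : ℚ) ≤ (2 * g - 2) + ∑ i, (1 - 1 / (n i : ℚ)) ∧
      (((2 * (g : ℚ) - 2) + ∑ i, (1 - 1 / (n i : ℚ)) = 1 / 42) ↔
        (g = 0 ∧ (List.ofFn n : Multiset ℕ) = ({2, 3, 7} : Multiset ℕ))) := by
  have hS : ∑ i, (1 - 1 / (n i : ℚ)) = (k : ℚ) - ∑ i, 1 / (n i : ℚ) := by
    rw [Finset.sum_sub_distrib, Finset.sum_const, Finset.card_univ, Fintype.card_fin,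
      nsmul_eq_mul, mul_one]
  rw [hS] at hneg ⊢
  set T := ∑ i, 1 / (n i : ℚ) with hTdef
  have hT0 : 0 ≤ T := Finset.sum_nonneg (fun i _ => by positivity)
  have hTle : T ≤ (k : ℚ) * (1/2) := by
    have h := Finset.sum_le_card_nsmul Finset.univ (fun i => 1 / (n i : ℚ)) (1/2)
      (fun i _ => by
        have := odl (m := 2) (by norm_num) (hn i); push_cast at this; exact this)
    rw [Finset.card_univ, Fintype.card_fin, nsmul_eq_mul] at h
    exact h
  rcases Nat.lt_or_ge g 1 with hg | hg
  · -- g = 0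
    have hg0 : g = 0 := by omega
    subst hg0
    push_cast at hneg ⊢
    -- hneg : 2 - (k - T) < 0, so k > 2 + T ≥ 2
    have hk3 : 3 ≤ k := by
      have h2 : (2:ℚ) < k := by linarith
      have : 2 < k := by exact_mod_cast h2
      omega
    -- case split on k
    rcases Nat.lt_or_ge k 4 with hk4 | hk4
    · have hk : k = 3 := by omega
      subst hk
      set M : Multiset ℕ := (List.ofFn n : Multiset ℕ) with hM
      set l : List ℕ := M.sort (· ≤ ·) with hldef
      have hperm : (↑l : Multiset ℕ) = M := Multiset.sort_eq _ _
      have hsorted : l.Pairwise (· ≤ ·) := Multiset.pairwise_sort _ _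
      have hlen : l.length = 3 := by
        rw [hldef, Multiset.length_sort, hM]
        simp
      obtain ⟨a, b, c, hl⟩ := List.length_eq_three.mp hlen
      rw [hl] at hperm hsorted
      have hab : a ≤ b := by
        have hs := hsorted
        simp [List.pairwise_cons] at hs; tauto
      have hbc : b ≤ c := by
        have hs := hsorted
        simp [List.pairwise_cons] at hs; tauto
      have hpermL : List.Perm (List.ofFn n) [a, b, c] :=
        (Multiset.coe_eq_coe.mp hperm).symm
      have hmem : ∀ x ∈ [a, b, c], 2 ≤ x := by
        intro x hx
        have hx' : x ∈ List.ofFn n := hpermL.mem_iff.mpr hx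
        rw [List.mem_ofFn] at hx'
        obtain ⟨i, rfl⟩ := hx'
        exact hn i
      have ha2 : 2 ≤ a := hmem a (by simp)
      have hTsum : T = 1 / a + 1 / b + 1 / c := by
        rw [hTdef]
        have h1 : ∑ i, 1 / (n i : ℚ) = ((List.ofFn n).map (fun m : ℕ => 1 / (m : ℚ))).sum := by
          rw [List.map_ofFn, List.sum_ofFn]; rfl
        rw [h1, List.Perm.sum_eq (hpermL.map _)]
        simp; ring
      have hlt : (1 / a + 1 / b + 1 / c : ℚ) < 1 := by
        rw [← hTsum]
        push_cast at hneg
        linarith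
      obtain ⟨hle, hiff⟩ := triple a b c ha2 hab hbc hlt
      constructor
      · rw [hTsum]; push_cast; linarith
      · constructor
        · intro he
          rw [hTsum] at he; push_cast at he
          have h41 : (1 / a + 1 / b + 1 / c : ℚ) = 41 / 42 := by linarith
          obtain ⟨ra, rb, rc⟩ := hiff.mp h41
          subst ra; subst rb; subst rc
          have hM237 : M = ({2, 3, 7} : Multiset ℕ) := by rw [← hperm]; rfl
          exact ⟨trivial, hM237⟩
        · rintro ⟨-, hm⟩
          have hpe : List.Perm [a, b, c] [2, 3, 7] :=
            Multiset.coe_eq_coe.mp (hperm.trans hm)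
          have heq : [a, b, c] = [2, 3, 7] :=
            List.Perm.eq_of_pairwise' hsorted (by norm_num [List.pairwise_cons]) hpe
          have h237 : a = 2 ∧ b = 3 ∧ c = 7 := by
            simp at heq; tauto
          have := hiff.mpr h237
          rw [hTsum]
          push_cast
          linarith
    rcases Nat.lt_or_ge k 5 with hk5 | hk5
    · have hk : k = 4 := by omega
      subst hk
      -- k = 4
      by_cases hall : ∀ i, n i = 2
      · exfalso
        have hT2 : T = 2 := by
          rw [hTdef]
          rw [Finset.sum_congr rfl (fun i _ => by rw [hall i])]
          norm_num
        rw [hT2] at hneg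
        norm_num at hneg
      · push_neg at hall
        obtain ⟨j, hj⟩ := hall
        have hj3 : 3 ≤ n j := by have := hn j; omega
        have h13 : (1 / (n j : ℚ)) ≤ 1/3 := by
          have := odl (m := 3) (by norm_num) hj3; push_cast at this; exact this
        have hTsplit : (∑ i ∈ Finset.univ.erase j, 1 / (n i : ℚ)) + 1 / (n j : ℚ) = T :=
          Finset.sum_erase_add _ _ (Finset.mem_univ j)
        have herase : (∑ i ∈ Finset.univ.erase j, 1 / (n i : ℚ)) ≤ 3 * (1/2) := by
          have h := Finset.sum_le_card_nsmul (Finset.univ.erase j)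
            (fun i => 1 / (n i : ℚ)) (1/2)
            (fun i _ => by
              have := odl (m := 2) (by norm_num) (hn i); push_cast at this; exact this)
          rw [Finset.card_erase_of_mem (Finset.mem_univ j), Finset.card_univ,
            Fintype.card_fin, nsmul_eq_mul] at h
          push_cast at h
          linarith
        have hT116 : T ≤ 11/6 := by linarith
        refine ⟨by linarith, ?_, ?_⟩
        · intro he; exfalso; linarith
        · rintro ⟨-, hm⟩
          exfalso
          have hc := congrArg Multiset.card hm
          rw [hcard, hcard237] at hc
          omega
    · -- k ≥ 5
      have hk5' : (5:ℚ) ≤ k := by exact_mod_cast hk5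
      refine ⟨by linarith, ?_, ?_⟩
      · intro he; exfalso; linarith
      · rintro ⟨-, hm⟩
        exfalso
        have hc := congrArg Multiset.card hm
        rw [hcard, hcard237] at hc
        omega
  · rcases Nat.lt_or_ge g 2 with hg2 | hg2
    · -- g = 1
      have hg1 : g = 1 := by omega
      subst hg1
      push_cast at hneg ⊢
      have hk1 : (1:ℚ) ≤ k := by
        by_contra hk
        have : (k:ℚ) = 0 := by
          have : k = 0 := by
            by_contra h0
            have : 1 ≤ k := by omega
            exact hk (by exact_mod_cast this)
          simp [this]
        linarith
      refine ⟨by linarith, ?_, ?_⟩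
      · intro he; exfalso; linarith
      · rintro ⟨h10, -⟩; exact h10.elim
    · -- g ≥ 2
      have hg' : (2:ℚ) ≤ g := by exact_mod_cast hg2
      have hk0 : (0:ℚ) ≤ k := Nat.cast_nonneg k
      refine ⟨by linarith, ?_, ?_⟩
      · intro he; exfalso; linarith
      · rintro ⟨h10, -⟩; omega
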